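/- Every continuous partial operator F from Baire space to Baire space has a self-modulating modulus of continuity, i.e., a function μ : ⊆(Q→A) → (Q'→ list Q) such that μ is a modulus of continuity for F and μ is a modulus of continuity for itself. -/

import Mathlib

/-- `φ` and `ψ` agree on all questions in the list `L`. -/
def agreeOn {Q A : Type*} (φ ψ : Q → A) (L : List Q) : Prop :=
  ∀ q ∈ L, φ q = ψ q

/-- Every continuous partial operator `F` (with domain `D`) from `Q → A` to `Q' → A'`
has a self-modulating modulus of continuity. -/
theorem exists_self_modulating_modulus
    {Q A Q' A' : Type*} [Countable Q] [Countable A] [Countable Q'] [Countable A']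
    (D : Set (Q → A)) (F : (Q → A) → (Q' → A'))
    (hF : ∀ φ ∈ D, ∀ q' : Q', ∃ L : List Q,
      ∀ ψ ∈ D, agreeOn φ ψ L → F ψ q' = F φ q') :
    ∃ μ : (Q → A) → Q' → List Q,
      (∀ φ ∈ D, ∀ ψ ∈ D, ∀ q' : Q',
        agreeOn φ ψ (μ φ q') → F φ q' = F ψ q') ∧
      (∀ φ ∈ D, ∀ ψ ∈ D, ∀ q' : Q',
        agreeOn φ ψ (μ φ q') → μ φ q' = μ ψ q') := by
  classical
  obtain ⟨e⟩ := nonempty_encodable Q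
  set listQ : ℕ → List Q := fun n => (List.range n).filterMap e.decode with hlistQ
  have hmem : ∀ (q : Q) (n : ℕ), e.encode q < n → q ∈ listQ n := by
    intro q n h
    simp only [hlistQ, List.mem_filterMap]
    exact ⟨e.encode q, List.mem_range.mpr h, e.encodek q⟩
  have hmono : ∀ {φ ψ : Q → A} {m n : ℕ}, m ≤ n →
      agreeOn φ ψ (listQ n) → agreeOn φ ψ (listQ m) := by
    intro φ ψ m n hmn h q hq
    apply h
    simp only [hlistQ, List.mem_filterMap] at hq ⊢
    obtain ⟨k, hk, hd⟩ := hq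
    exact ⟨k, List.mem_range.mpr (lt_of_lt_of_le (List.mem_range.mp hk) hmn), hd⟩
  have hbound : ∀ (l : List ℕ), ∀ a ∈ l, a < l.foldr max 0 + 1 := by
    intro l
    induction l with
    | nil => simp
    | cons b t ih =>
      intro a ha
      rcases List.mem_cons.mp ha with h | h
      · subst h; simp only [List.foldr_cons]; omega
      · have := ih a h
        simp only [List.foldr_cons]
        omega
  have hex : ∀ φ, φ ∈ D → ∀ q' : Q', ∃ n, ∀ ψ ∈ D,
      agreeOn φ ψ (listQ n) → F ψ q' = F φ q' := by
    intro φ hφ q'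
    obtain ⟨L, hL⟩ := hF φ hφ q'
    refine ⟨(L.map e.encode).foldr max 0 + 1, fun ψ hψ hagree => hL ψ hψ ?_⟩
    intro q hq
    exact hagree q (hmem q _ (hbound _ _ (List.mem_map_of_mem (f := e.encode) hq)))
  refine ⟨fun φ q' => listQ (if h : φ ∈ D then Nat.find (hex φ h q') else 0), ?_, ?_⟩
  · intro φ hφ ψ hψ q' hagree
    simp only [dif_pos hφ] at hagree
    exact (Nat.find_spec (hex φ hφ q') ψ hψ hagree).symm
  · intro φ hφ ψ hψ q' hagree
    simp only [dif_pos hφ] at hagree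
    simp only [dif_pos hφ, dif_pos hψ]
    set nφ := Nat.find (hex φ hφ q') with hnφ
    set nψ := Nat.find (hex ψ hψ q') with hnψ
    have hFψφ : F ψ q' = F φ q' := Nat.find_spec (hex φ hφ q') ψ hψ hagree
    have hψle : nψ ≤ nφ := by
      rw [hnψ]
      apply Nat.find_le
      intro χ hχ hagr
      have hagr' : agreeOn φ χ (listQ nφ) := fun q hq => (hagree q hq).trans (hagr q hq)
      exact (Nat.find_spec (hex φ hφ q') χ hχ hagr').trans hFψφ.symm
    have hagree' : agreeOn ψ φ (listQ nψ) :=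
      hmono hψle (fun q hq => (hagree q hq).symm)
    have hφle : nφ ≤ nψ := by
      rw [hnφ]
      apply Nat.find_le
      intro χ hχ hagr
      have hagr' : agreeOn ψ χ (listQ nψ) := fun q hq => (hagree' q hq).trans (hagr q hq)
      exact (Nat.find_spec (hex ψ hψ q') χ hχ hagr').trans hFψφ
    rw [le_antisymm hφle hψle]
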